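/- Let F have characteristic 0 and fix n₁ < n₂ ≤ n. With Δ̃ as above, for j₁ ∈ {n₁+1,...,n₂} and i₃ ∈ {n₁+1,...,n₂}, the operator x_{j₁}∂_{x_{i₃}} − y_{i₃}∂_{y_{j₁}} commutes with Δ̃ on F[x₁,...,xₙ,y₁,...,yₙ]. -/

import Mathlib

open MvPolynomial

theorem pderiv_pderiv_comm' {σ R : Type*} [CommSemiring R] (i j : σ) (f : MvPolynomial σ R) :
    pderiv i (pderiv j f) = pderiv j (pderiv i f) := by
  classical
  induction f using MvPolynomial.induction_on' with
  | add p q hp hq => simp [hp, hq]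
  | monomial s a =>
    by_cases h : i = j
    · subst h; rfl
    · simp only [pderiv_monomial]
      rw [tsub_right_comm]
      congr 1
      rw [Finsupp.tsub_apply, Finsupp.tsub_apply, Finsupp.single_eq_of_ne h,
        Finsupp.single_eq_of_ne (Ne.symm h)]
      simp; ring

noncomputable def pdAux {σ R : Type*} [CommRing R] (a : σ) : Module.End R (MvPolynomial σ R) :=
  (pderiv a).toLinearMap

section Ops
variable {σ R : Type*} [CommRing R]

theorem pdAux_comm (a b : σ) : pdAux (R := R) a * pdAux b = pdAux b * pdAux a := by
  apply LinearMap.ext; intro f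
  simp [pdAux, Module.End.mul_apply, pderiv_pderiv_comm']

theorem pdAux_mulLeft_X_of_ne {a b : σ} (h : b ≠ a) :
    pdAux (R := R) a * LinearMap.mulLeft R (X b) = LinearMap.mulLeft R (X b) * pdAux a := by
  apply LinearMap.ext; intro g
  simp [pdAux, Module.End.mul_apply, pderiv_mul, pderiv_X_of_ne h]

theorem mulLeft_comm' (f g : MvPolynomial σ R) :
    LinearMap.mulLeft R f * LinearMap.mulLeft R g =
      LinearMap.mulLeft R g * LinearMap.mulLeft R f := by
  apply LinearMap.ext; intro h
  simp [Module.End.mul_apply]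
  ring

/-- Key commutator identity: delta in the first `pdAux` factor. -/
theorem key' (a b c : σ) (h : b ≠ a) :
    pdAux (R := R) a * pdAux b * (LinearMap.mulLeft R (X a) * pdAux c)
      - LinearMap.mulLeft R (X a) * pdAux c * (pdAux a * pdAux b)
      = pdAux b * pdAux c := by
  apply LinearMap.ext; intro g
  have hcomm : pderiv a (pderiv b (pderiv c g)) = pderiv c (pderiv a (pderiv b g)) := by
    rw [pderiv_pderiv_comm' b c g, pderiv_pderiv_comm' a c _]
  simp [pdAux, Module.End.mul_apply, pderiv_mul, pderiv_X_self, pderiv_X_of_ne h,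
    pderiv_X_of_ne h.symm, hcomm]

/-- Key commutator identity: delta in the second `pdAux` factor. -/
theorem key (a b c : σ) (h : a ≠ b) :
    pdAux (R := R) a * pdAux b * (LinearMap.mulLeft R (X b) * pdAux c)
      - LinearMap.mulLeft R (X b) * pdAux c * (pdAux a * pdAux b)
      = pdAux a * pdAux c := by
  apply LinearMap.ext; intro g
  have hcomm : pderiv a (pderiv b (pderiv c g)) = pderiv c (pderiv a (pderiv b g)) := by
    rw [pderiv_pderiv_comm' b c g, pderiv_pderiv_comm' a c _]
  simp [pdAux, Module.End.mul_apply, pderiv_mul, pderiv_X_self, pderiv_X_of_ne h,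
    pderiv_X_of_ne h.symm, hcomm]

end Ops

set_option linter.unusedSectionVars false

namespace Stmt10

variable (F : Type*) [Field F] [CharZero F] (n n₁ n₂ : ℕ)

abbrev A := MvPolynomial (Fin n ⊕ Fin n) F

noncomputable def xv (i : Fin n) : A F n := X (Sum.inl i)
noncomputable def yv (i : Fin n) : A F n := X (Sum.inr i)
noncomputable def mul (f : A F n) : Module.End F (A F n) := LinearMap.mulLeft F f
noncomputable def pdx (i : Fin n) : Module.End F (A F n) :=
  (pderiv (Sum.inl i : Fin n ⊕ Fin n)).toLinearMap
noncomputable def pdy (i : Fin n) : Module.End F (A F n) :=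
  (pderiv (Sum.inr i : Fin n ⊕ Fin n)).toLinearMap

/-- The twisted Laplace operator
`Δ̃ = Σ_{i=1}^{n₁} x_i∂_{y_i} − Σ_{r=n₁+1}^{n₂} ∂_{x_r}∂_{y_r} + Σ_{s=n₂+1}^{n} y_s∂_{x_s}`
(indices 0-based). -/
noncomputable def lap : Module.End F (A F n) :=
  (∑ i ∈ Finset.univ.filter (fun i : Fin n => (i : ℕ) < n₁),
      mul F n (xv F n i) * pdy F n i)
  - (∑ r ∈ Finset.univ.filter (fun r : Fin n => n₁ ≤ (r : ℕ) ∧ (r : ℕ) < n₂),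
      pdx F n r * pdy F n r)
  + ∑ s ∈ Finset.univ.filter (fun s : Fin n => n₂ ≤ (s : ℕ)),
      mul F n (yv F n s) * pdx F n s

section CommLemmas

variable {F n}

theorem cm_xx {a b : Fin n} (h : a ≠ b) :
    Commute (pdx F n a) (mul F n (xv F n b)) :=
  pdAux_mulLeft_X_of_ne (fun he => h (Sum.inl.inj he).symm)

theorem cm_xy (a b : Fin n) : Commute (pdx F n a) (mul F n (yv F n b)) :=
  pdAux_mulLeft_X_of_ne (by simp)

theorem cm_yx (a b : Fin n) : Commute (pdy F n a) (mul F n (xv F n b)) :=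
  pdAux_mulLeft_X_of_ne (by simp)

theorem cm_yy {a b : Fin n} (h : a ≠ b) :
    Commute (pdy F n a) (mul F n (yv F n b)) :=
  pdAux_mulLeft_X_of_ne (fun he => h (Sum.inr.inj he).symm)

theorem cm_mm (f g : A F n) : Commute (mul F n f) (mul F n g) := mulLeft_comm' f g

theorem cm_pxx (a b : Fin n) : Commute (pdx F n a) (pdx F n b) := pdAux_comm _ _
theorem cm_pxy (a b : Fin n) : Commute (pdx F n a) (pdy F n b) := pdAux_comm _ _
theorem cm_pyx (a b : Fin n) : Commute (pdy F n a) (pdx F n b) := pdAux_comm _ _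
theorem cm_pyy (a b : Fin n) : Commute (pdy F n a) (pdy F n b) := pdAux_comm _ _

end CommLemmas

set_option maxHeartbeats 1600000 in
/-- for `j₁, i₃ ∈ {n₁+1,...,n₂}`, the operator
`x_{j₁}∂_{x_{i₃}} − y_{i₃}∂_{y_{j₁}}` commutes with `Δ̃`. -/
theorem lap_commutes_middle (h₁ : 1 ≤ n₁) (h₁₂ : n₁ < n₂) (h₂ : n₂ ≤ n)
    (j₁ i₃ : Fin n) (hj₁ : n₁ ≤ (j₁ : ℕ) ∧ (j₁ : ℕ) < n₂)
    (hi₃ : n₁ ≤ (i₃ : ℕ) ∧ (i₃ : ℕ) < n₂) :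
    lap F n n₁ n₂ * (mul F n (xv F n j₁) * pdx F n i₃ - mul F n (yv F n i₃) * pdy F n j₁) =
      (mul F n (xv F n j₁) * pdx F n i₃ - mul F n (yv F n i₃) * pdy F n j₁) *
        lap F n n₁ n₂ := by
  classical
  set Dx : Module.End F (A F n) := mul F n (xv F n j₁) * pdx F n i₃ with hDx
  set Dy : Module.End F (A F n) := mul F n (yv F n i₃) * pdy F n j₁ with hDy
  set C : Module.End F (A F n) := pdy F n j₁ * pdx F n i₃ with hC
  -- first sum commutes with D termwise
  have h1 : Commute
      (∑ i ∈ Finset.univ.filter (fun i : Fin n => (i : ℕ) < n₁),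
        mul F n (xv F n i) * pdy F n i) (Dx - Dy) := by
    refine Commute.sum_left _ _ _ (fun i hi => ?_)
    simp only [Finset.mem_filter] at hi
    have hij : i ≠ j₁ := fun he => absurd (he ▸ hi.2) (by omega)
    have hii : i ≠ i₃ := fun he => absurd (he ▸ hi.2) (by omega)
    refine Commute.sub_right ?_ ?_
    · exact Commute.mul_left
        (Commute.mul_right (cm_mm _ _) ((cm_xx (Ne.symm hii)).symm))
        (Commute.mul_right (cm_yx i j₁) (cm_pyx i i₃))
    · exact Commute.mul_left
        (Commute.mul_right (cm_mm _ _) ((cm_yx j₁ i).symm))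
        (Commute.mul_right (cm_yy hii) (cm_pyy i j₁))
  -- third sum commutes with D termwise
  have h3 : Commute
      (∑ s ∈ Finset.univ.filter (fun s : Fin n => n₂ ≤ (s : ℕ)),
        mul F n (yv F n s) * pdx F n s) (Dx - Dy) := by
    refine Commute.sum_left _ _ _ (fun s hs => ?_)
    simp only [Finset.mem_filter] at hs
    have hsj : s ≠ j₁ := fun he => absurd (he ▸ hs.2) (by omega)
    have hsi : s ≠ i₃ := fun he => absurd (he ▸ hs.2) (by omega)
    refine Commute.sub_right ?_ ?_
    · exact Commute.mul_left
        (Commute.mul_right (cm_mm _ _) ((cm_xy i₃ s).symm))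
        (Commute.mul_right (cm_xx hsj) (cm_pxx s i₃))
    · exact Commute.mul_left
        (Commute.mul_right (cm_mm _ _) ((cm_yy (Ne.symm hsj)).symm))
        (Commute.mul_right (cm_xy s i₃) (cm_pxy s j₁))
  -- middle sum
  set S2 : Module.End F (A F n) :=
    ∑ r ∈ Finset.univ.filter (fun r : Fin n => n₁ ≤ (r : ℕ) ∧ (r : ℕ) < n₂),
      pdx F n r * pdy F n r with hS2
  have hjmem : j₁ ∈ Finset.univ.filter (fun r : Fin n => n₁ ≤ (r : ℕ) ∧ (r : ℕ) < n₂) :=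
    Finset.mem_filter.mpr ⟨Finset.mem_univ _, hj₁⟩
  have himem : i₃ ∈ Finset.univ.filter (fun r : Fin n => n₁ ≤ (r : ℕ) ∧ (r : ℕ) < n₂) :=
    Finset.mem_filter.mpr ⟨Finset.mem_univ _, hi₃⟩
  have e1 : S2 * Dx - Dx * S2 = C := by
    rw [hS2, Finset.sum_mul, Finset.mul_sum, ← Finset.sum_sub_distrib]
    have hterm : ∀ r ∈ Finset.univ.filter (fun r : Fin n => n₁ ≤ (r : ℕ) ∧ (r : ℕ) < n₂),
        pdx F n r * pdy F n r * Dx - Dx * (pdx F n r * pdy F n r)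
          = if r = j₁ then C else 0 := by
      intro r _
      by_cases hrj : r = j₁
      · subst hrj
        rw [if_pos rfl, hDx, hC]
        show pdAux (Sum.inl r) * pdAux (Sum.inr r)
            * (LinearMap.mulLeft F (X (Sum.inl r)) * pdAux (Sum.inl i₃))
          - LinearMap.mulLeft F (X (Sum.inl r)) * pdAux (Sum.inl i₃)
            * (pdAux (Sum.inl r) * pdAux (Sum.inr r))
          = pdAux (Sum.inr r) * pdAux (Sum.inl i₃)
        exact key' (Sum.inl r) (Sum.inr r) (Sum.inl i₃) (by simp)
      · rw [if_neg hrj, sub_eq_zero]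
        exact (Commute.mul_left
          (Commute.mul_right (cm_xx hrj) (cm_pxx r i₃))
          (Commute.mul_right (cm_yx r j₁) (cm_pyx r i₃))).eq
    rw [Finset.sum_congr rfl hterm, Finset.sum_ite_eq' _ j₁ (fun _ => C), if_pos hjmem]
  have e2 : S2 * Dy - Dy * S2 = C := by
    rw [hS2, Finset.sum_mul, Finset.mul_sum, ← Finset.sum_sub_distrib]
    have hterm : ∀ r ∈ Finset.univ.filter (fun r : Fin n => n₁ ≤ (r : ℕ) ∧ (r : ℕ) < n₂),
        pdx F n r * pdy F n r * Dy - Dy * (pdx F n r * pdy F n r)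
          = if r = i₃ then C else 0 := by
      intro r _
      by_cases hri : r = i₃
      · subst hri
        rw [if_pos rfl, hDy, hC, (cm_pyx j₁ r).eq]
        show pdAux (Sum.inl r) * pdAux (Sum.inr r)
            * (LinearMap.mulLeft F (X (Sum.inr r)) * pdAux (Sum.inr j₁))
          - LinearMap.mulLeft F (X (Sum.inr r)) * pdAux (Sum.inr j₁)
            * (pdAux (Sum.inl r) * pdAux (Sum.inr r))
          = pdAux (Sum.inl r) * pdAux (Sum.inr j₁)
        exact key (Sum.inl r) (Sum.inr r) (Sum.inr j₁) (by simp)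
      · rw [if_neg hri, sub_eq_zero]
        exact (Commute.mul_left
          (Commute.mul_right (cm_xy r i₃) (cm_pxy r j₁))
          (Commute.mul_right (cm_yy hri) (cm_pyy r j₁))).eq
    rw [Finset.sum_congr rfl hterm, Finset.sum_ite_eq' _ i₃ (fun _ => C), if_pos himem]
  have h2 : Commute S2 (Dx - Dy) := by
    show S2 * (Dx - Dy) = (Dx - Dy) * S2
    rw [mul_sub, sub_mul, sub_eq_iff_eq_add.mp e1, sub_eq_iff_eq_add.mp e2]
    abel
  exact ((h1.sub_left h2).add_left h3)

end Stmt10
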